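/- The General Manipulability Theorem is false when agents' preferences are only assumed to be substitutable: there exists a many-to-one matching market (F, W, ≻) with substitutable preferences, a stable matching rule h (namely the firm-optimal stable rule h_F), and an agent a ∈ W with h(≻)(a) ≠ μ_W(≻)(a), such that for every possible misreport ≻'_a of agent a, h(≻_{-a}, ≻'_a)(a) is not strictly ≻_a-preferred to h(≻)(a). -/

import Mathlib

/-!
Common framework for many-to-many matching markets (Manasero–Oviedo,
"General Manipulability Theorem for a Matching Model").

Agents on each side have strict linear orders (strict total orders) over
finsets of the other side.  `Pref.Ch` is the choice function, selecting the
most preferred subset.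
-/

/-- A strict preference of an agent over subsets of the (finite) set `α` of
potential partners: a strict total order on `Finset α`, where `gt S T` means
`S` is strictly preferred to `T`. -/
structure Pref (α : Type*) [DecidableEq α] [Fintype α] where
  gt : Finset α → Finset α → Prop
  isSTO : IsStrictTotalOrder (Finset α) gt

namespace Pref

variable {α : Type*} [DecidableEq α] [Fintype α]

/-- The choice set `Ch(S, ≻)`: the `≻`-maximal subset of `S`. -/
noncomputable def Ch (p : Pref α) (S : Finset α) : Finset α := by
  classical
  haveI := p.isSTO
  haveI : IsStrictTotalOrder (Finset α) (Function.swap p.gt) := IsStrictTotalOrder.swap _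
  exact @Finset.max' _ (linearOrderOfSTO (Function.swap p.gt)) S.powerset
    ⟨∅, Finset.empty_mem_powerset S⟩

/-- Substitutability: if `w ∈ Ch(S)` then `w ∈ Ch(S \ {w'})` for any other `w' ∈ S`. -/
def Substitutable (p : Pref α) : Prop :=
  ∀ (S : Finset α) (w w' : α), w ∈ S → w' ∈ S → w ≠ w' →
    w ∈ p.Ch S → w ∈ p.Ch (S.erase w')

/-- Law of aggregate demand: `Y ⊆ X` implies `|Ch(Y)| ≤ |Ch(X)|`. -/
def LAD (p : Pref α) : Prop :=
  ∀ Y X : Finset α, Y ⊆ X → (p.Ch Y).card ≤ (p.Ch X).card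

/-- `p.HasList L` : the sets in `L` are exactly the acceptable sets, in strictly
decreasing order of preference and all preferred to `∅`; any set not in the
list (other than `∅`) is unacceptable, i.e. worse than `∅`. -/
def HasList (p : Pref α) (L : List (Finset α)) : Prop :=
  List.Chain' p.gt (L ++ [∅]) ∧ ∀ S : Finset α, S ∉ L → S ≠ ∅ → p.gt ∅ S

/-- `q`-separability of a preference with quota `q`. -/
def QSeparable (p : Pref α) (q : ℕ) : Prop :=
  (∀ S : Finset α, q < S.card → p.gt ∅ S) ∧
  (∀ (S : Finset α) (v : α), v ∉ S → S.card < q → (p.gt (insert v S) S ↔ p.gt {v} ∅))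

end Pref

/-- `p'` is the restriction `p |_T` of `p` to `T`:
(i) any set not contained in `T` is worse than `∅`;
(ii) for `S ⊆ T`, `S ≻' ∅ ↔ S ≻ ∅`;
(iii) for `S, S' ⊆ T`, `S ≻' S' ↔ S ≻ S'`. -/
def IsRestriction {α : Type*} [DecidableEq α] [Fintype α]
    (p : Pref α) (T : Finset α) (p' : Pref α) : Prop :=
  (∀ S : Finset α, ¬ S ⊆ T → p'.gt ∅ S) ∧
  (∀ S : Finset α, S ⊆ T → (p'.gt S ∅ ↔ p.gt S ∅)) ∧
  (∀ S S' : Finset α, S ⊆ T → S' ⊆ T → (p'.gt S S' ↔ p.gt S S'))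

variable (F W : Type*) [DecidableEq F] [Fintype F] [DecidableEq W] [Fintype W]

/-- A (many-to-many) matching between firms `F` and workers `W`. -/
structure Matching where
  fm : F → Finset W
  wm : W → Finset F
  compat : ∀ f w, w ∈ fm f ↔ f ∈ wm w

/-- A preference profile: one preference for each firm and each worker. -/
structure Profile where
  fp : F → Pref W
  wp : W → Pref F

variable {F W}

/-- All agents' preferences are substitutable. -/
def Profile.Substitutable (P : Profile F W) : Prop :=
  (∀ f, (P.fp f).Substitutable) ∧ (∀ w, (P.wp w).Substitutable)

/-- All agents' preferences satisfy the law of aggregate demand. -/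
def Profile.LAD (P : Profile F W) : Prop :=
  (∀ f, (P.fp f).LAD) ∧ (∀ w, (P.wp w).LAD)

/-- The profile obtained from `P` by replacing firm `f`'s preference by `p`. -/
def Profile.updateFirm (P : Profile F W) (f : F) (p : Pref W) : Profile F W :=
  ⟨Function.update P.fp f p, P.wp⟩

/-- The profile obtained from `P` by replacing worker `w`'s preference by `p`. -/
def Profile.updateWorker (P : Profile F W) (w : W) (p : Pref F) : Profile F W :=
  ⟨P.fp, Function.update P.wp w p⟩

/-- Individual rationality: every agent chooses its whole assignment. -/
def IndRational (P : Profile F W) (μ : Matching F W) : Prop :=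
  (∀ f, (P.fp f).Ch (μ.fm f) = μ.fm f) ∧ (∀ w, (P.wp w).Ch (μ.wm w) = μ.wm w)

/-- The pair `(w, f)` blocks the matching `μ`. -/
def Blocks (P : Profile F W) (μ : Matching F W) (w : W) (f : F) : Prop :=
  w ∉ μ.fm f ∧ w ∈ (P.fp f).Ch (insert w (μ.fm f)) ∧ f ∈ (P.wp w).Ch (insert f (μ.wm w))

/-- (Pairwise) stability. -/
def Stable (P : Profile F W) (μ : Matching F W) : Prop :=
  IndRational P μ ∧ ∀ w f, ¬ Blocks P μ w f

/-- `μF` is the firm-optimal stable matching for `P`. -/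
def FirmOptimal (P : Profile F W) (μF : Matching F W) : Prop :=
  Stable P μF ∧ ∀ μ, Stable P μ → ∀ f, μF.fm f = μ.fm f ∨ (P.fp f).gt (μF.fm f) (μ.fm f)

/-- `μW` is the worker-optimal stable matching for `P`. -/
def WorkerOptimal (P : Profile F W) (μW : Matching F W) : Prop :=
  Stable P μW ∧ ∀ μ, Stable P μ → ∀ w, μW.wm w = μ.wm w ∨ (P.wp w).gt (μW.wm w) (μ.wm w)

/-- Firm `f` satisfies the manipulability property (w.r.t. the rule `h`, the true
profile `P` and the firm-optimal stable matching `μF`): if `h(≻)(f) ≠ μF(≻)(f)`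
then some report `≻'_f` (in the domain: substitutable and LAD) gives `f` a
strictly `≻_f`-better assignment. -/
def FirmManip (h : Profile F W → Matching F W) (P : Profile F W)
    (μF : Matching F W) (f : F) : Prop :=
  (h P).fm f ≠ μF.fm f → ∃ p' : Pref W, p'.Substitutable ∧ p'.LAD ∧
    (P.fp f).gt ((h (P.updateFirm f p')).fm f) ((h P).fm f)

/-- Firm `f` satisfies the manipulability property with Blair order. -/
def FirmManipB (h : Profile F W → Matching F W) (P : Profile F W)
    (μF : Matching F W) (f : F) : Prop :=
  (h P).fm f ≠ μF.fm f → ∃ p' : Pref W, p'.Substitutable ∧ p'.LAD ∧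
    ((P.fp f).Ch ((h (P.updateFirm f p')).fm f ∪ (h P).fm f) = (h (P.updateFirm f p')).fm f ∧
      (h (P.updateFirm f p')).fm f ≠ (h P).fm f)

/-- Worker `w` satisfies the manipulability property. -/
def WorkerManip (h : Profile F W → Matching F W) (P : Profile F W)
    (μW : Matching F W) (w : W) : Prop :=
  (h P).wm w ≠ μW.wm w → ∃ p' : Pref F, p'.Substitutable ∧ p'.LAD ∧
    (P.wp w).gt ((h (P.updateWorker w p')).wm w) ((h P).wm w)

/-- Worker `w` satisfies the manipulability property with Blair order. -/
def WorkerManipB (h : Profile F W → Matching F W) (P : Profile F W)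
    (μW : Matching F W) (w : W) : Prop :=
  (h P).wm w ≠ μW.wm w → ∃ p' : Pref F, p'.Substitutable ∧ p'.LAD ∧
    ((P.wp w).Ch ((h (P.updateWorker w p')).wm w ∪ (h P).wm w) = (h (P.updateWorker w p')).wm w ∧
      (h (P.updateWorker w p')).wm w ≠ (h P).wm w)

namespace Pref

variable {α : Type*} [DecidableEq α] [Fintype α]

lemma gt_irrefl (p : Pref α) (S : Finset α) : ¬ p.gt S S :=
  @irrefl _ p.gt p.isSTO.toIrrefl S

lemma gt_trans (p : Pref α) {S T U : Finset α} (h1 : p.gt S T) (h2 : p.gt T U) : p.gt S U :=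
  p.isSTO.toIsTrans.trans S T U h1 h2

lemma gt_asymm (p : Pref α) {S T : Finset α} (h1 : p.gt S T) (h2 : p.gt T S) : False :=
  p.gt_irrefl S (p.gt_trans h1 h2)

lemma gt_total (p : Pref α) {S T : Finset α} (h : S ≠ T) : p.gt S T ∨ p.gt T S := by
  rcases @trichotomous _ p.gt p.isSTO.toTrichotomous S T with h1 | h1 | h1
  · exact Or.inl h1
  · exact absurd h1 h
  · exact Or.inr h1

lemma Ch_spec (p : Pref α) (S : Finset α) :
    p.Ch S ⊆ S ∧ ∀ T ⊆ S, T = p.Ch S ∨ p.gt (p.Ch S) T := by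
  classical
  haveI := p.isSTO
  haveI : IsStrictTotalOrder (Finset α) (Function.swap p.gt) := IsStrictTotalOrder.swap _
  unfold Ch
  constructor
  · simpa [Finset.mem_powerset] using
      @Finset.max'_mem _ (linearOrderOfSTO (Function.swap p.gt)) S.powerset
        ⟨∅, Finset.empty_mem_powerset S⟩
  · intro T hT
    exact @Finset.le_max' _ (linearOrderOfSTO (Function.swap p.gt)) S.powerset T
      (Finset.mem_powerset.2 hT)

lemma Ch_subset (p : Pref α) (S : Finset α) : p.Ch S ⊆ S := (p.Ch_spec S).1

lemma Ch_max (p : Pref α) {S T : Finset α} (hT : T ⊆ S) :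
    T = p.Ch S ∨ p.gt (p.Ch S) T := (p.Ch_spec S).2 T hT

lemma Ch_eq_of (p : Pref α) {S T : Finset α} (hT : T ⊆ S)
    (h : ∀ U ⊆ S, U ≠ T → p.gt T U) : p.Ch S = T := by
  rcases p.Ch_max hT with h1 | h1
  · exact h1.symm
  · by_contra hne
    exact p.gt_asymm h1 (h (p.Ch S) (p.Ch_subset S) (fun e => hne e))

lemma Ch_eq_iff (p : Pref α) {S T : Finset α} :
    p.Ch S = T ↔ T ⊆ S ∧ ∀ U ∈ S.powerset, U ≠ T → p.gt T U := by
  constructor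
  · rintro rfl
    refine ⟨p.Ch_subset S, fun U hU hne => ?_⟩
    rcases p.Ch_max (Finset.mem_powerset.1 hU) with h1 | h1
    · exact absurd h1 hne
    · exact h1
  · rintro ⟨h1, h2⟩
    exact p.Ch_eq_of h1 (fun U hU => h2 U (Finset.mem_powerset.2 hU))

lemma Ch_empty (p : Pref α) : p.Ch ∅ = ∅ :=
  Finset.subset_empty.1 (p.Ch_subset ∅)

/-- IRC: irrelevance of rejected contracts. -/
lemma Ch_eq_Ch (p : Pref α) {S T : Finset α} (h1 : p.Ch T ⊆ S) (h2 : S ⊆ T) :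
    p.Ch S = p.Ch T := by
  refine p.Ch_eq_of h1 (fun U hU hne => ?_)
  rcases p.Ch_max (hU.trans h2) with h3 | h3
  · exact absurd h3.symm (fun e => hne e.symm)
  · exact h3

lemma Ch_idem (p : Pref α) (S : Finset α) : p.Ch (p.Ch S) = p.Ch S :=
  p.Ch_eq_Ch subset_rfl (p.Ch_subset S)

/-- Set form of substitutability. -/
lemma mem_Ch_of_subset (p : Pref α) (hp : p.Substitutable) :
    ∀ (T : Finset α) {S : Finset α} {w : α}, S ⊆ T → w ∈ S → w ∈ p.Ch T → w ∈ p.Ch S := by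
  intro T
  induction T using Finset.strongInduction with
  | _ T ih =>
    intro S w hST hw hch
    rcases eq_or_ssubset_of_subset hST with rfl | hss
    · exact hch
    · obtain ⟨w', hw'T, hw'S⟩ := Finset.exists_of_ssubset hss
      have hne : w ≠ w' := fun h => hw'S (h ▸ hw)
      have h1 : w ∈ p.Ch (T.erase w') :=
        hp T w w' (hST hw) hw'T hne hch
      exact ih (T.erase w') (Finset.erase_ssubset hw'T)
        (Finset.subset_erase.2 ⟨hST, hw'S⟩) hw h1

/-- Aggregation: if `Ch X = X` and no element of `D` is chosen when added alone to `X`,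
then `Ch (X ∪ D) = X`. -/
lemma Ch_union (p : Pref α) (hp : p.Substitutable) {X D : Finset α}
    (hX : p.Ch X = X) (hD : ∀ w ∈ D, w ∉ X → w ∉ p.Ch (insert w X)) :
    p.Ch (X ∪ D) = X := by
  by_cases hsub : p.Ch (X ∪ D) ⊆ X
  · rw [← p.Ch_eq_Ch hsub Finset.subset_union_left, hX]
  · obtain ⟨w, hw1, hw2⟩ := Finset.not_subset.1 hsub
    have hwD : w ∈ D := by
      rcases Finset.mem_union.1 (p.Ch_subset _ hw1) with h | h
      · exact absurd h hw2
      · exact h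
    have : w ∈ p.Ch (insert w X) := by
      refine p.mem_Ch_of_subset hp (X ∪ D) ?_ (Finset.mem_insert_self w X) hw1
      exact Finset.insert_subset (Finset.mem_union_right _ hwD) Finset.subset_union_left
    exact absurd this (hD w hwD hw2)

end Pref

/-! ### Existence of the firm-optimal stable matching (substitutable preferences) -/

section Existence

attribute [local instance] Classical.propDecidable

variable {F W : Type*} [DecidableEq F] [Fintype F] [DecidableEq W] [Fintype W]

noncomputable local instance : CompleteLattice (Finset W) := Fintype.toCompleteLattice _
noncomputable local instance : CompleteLattice (Finset F) := Fintype.toCompleteLattice _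

/-- The Adachi / Hatfield–Milgrom prematching lattice. -/
abbrev PreL (F W : Type*) [DecidableEq F] [Fintype F] [DecidableEq W] [Fintype W] :=
  (F → Finset W) × (W → Finset F)ᵒᵈ

/-- The deferred-acceptance operator. -/
noncomputable def Tmap (P : Profile F W) (hs : P.Substitutable) : PreL F W →o PreL F W where
  toFun := fun AB =>
    (fun f => Finset.univ.filter
        (fun w => f ∈ (P.wp w).Ch (insert f (OrderDual.ofDual AB.2 w))),
     OrderDual.toDual (fun w => Finset.univ.filter
        (fun f => w ∈ (P.fp f).Ch (insert w (AB.1 f)))))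
  monotone' := by
    rintro ⟨A, B⟩ ⟨A', B'⟩ ⟨h1, h2⟩
    have h1' : ∀ f, A f ⊆ A' f := fun f => h1 f
    have h2' : ∀ w, OrderDual.ofDual B' w ⊆ OrderDual.ofDual B w := fun w => h2 w
    refine ⟨fun f w hw => ?_, fun w => ?_⟩
    · simp only [Finset.mem_filter, Finset.mem_univ, true_and] at hw ⊢
      exact (P.wp w).mem_Ch_of_subset (hs.2 w) _
        (Finset.insert_subset_insert f (h2' w)) (Finset.mem_insert_self f _) hw
    · intro f hf
      have hf2 : f ∈ Finset.univ.filter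
          (fun f => w ∈ (P.fp f).Ch (insert w (A' f))) := hf
      show f ∈ Finset.univ.filter (fun f => w ∈ (P.fp f).Ch (insert w (A f)))
      simp only [Finset.mem_filter, Finset.mem_univ, true_and] at hf2 ⊢
      exact (P.fp f).mem_Ch_of_subset (hs.1 f) _
        (Finset.insert_subset_insert w (h1' f)) (Finset.mem_insert_self w _) hf2

theorem exists_firmOptimal (P : Profile F W) (hs : P.Substitutable) :
    ∃ μ : Matching F W, FirmOptimal P μ := by
  classical
  obtain ⟨G, hfix, hgreatest⟩ : ∃ G, Tmap P hs G = G ∧ ∀ X, Tmap P hs X = X → X ≤ G :=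
    ⟨(Tmap P hs).gfp, (Tmap P hs).map_gfp,
      fun X hX => (Tmap P hs).le_gfp (le_of_eq hX.symm)⟩
  set A : F → Finset W := G.1 with hA
  set B : W → Finset F := OrderDual.ofDual G.2 with hB
  have hfix1 : ∀ f, Finset.univ.filter
      (fun w => f ∈ (P.wp w).Ch (insert f (B w))) = A f :=
    fun f => congrFun (congrArg Prod.fst hfix) f
  have hfix2 : ∀ w, Finset.univ.filter
      (fun f => w ∈ (P.fp f).Ch (insert w (A f))) = B w :=
    fun w => congrFun (congrArg (fun x => OrderDual.ofDual x.2) hfix) w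
  have fpA : ∀ (f : F) (w : W), w ∈ A f ↔ f ∈ (P.wp w).Ch (insert f (B w)) := by
    intro f w
    rw [← hfix1 f]
    simp
  have fpB : ∀ (w : W) (f : F), f ∈ B w ↔ w ∈ (P.fp f).Ch (insert w (A f)) := by
    intro w f
    rw [← hfix2 w]
    simp
  -- the candidate matching
  have compat : ∀ (f : F) (w : W),
      w ∈ (P.fp f).Ch (A f) ↔ f ∈ (P.wp w).Ch (B w) := by
    intro f w
    constructor
    · intro h
      have hwA : w ∈ A f := (P.fp f).Ch_subset _ h
      have h1 : w ∈ (P.fp f).Ch (insert w (A f)) := by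
        rwa [Finset.insert_eq_self.2 hwA]
      have hfB : f ∈ B w := (fpB w f).2 h1
      have h2 := (fpA f w).1 hwA
      rwa [Finset.insert_eq_self.2 hfB] at h2
    · intro h
      have hfB : f ∈ B w := (P.wp w).Ch_subset _ h
      have h1 : f ∈ (P.wp w).Ch (insert f (B w)) := by
        rwa [Finset.insert_eq_self.2 hfB]
      have hwA : w ∈ A f := (fpA f w).2 h1
      have h2 := (fpB w f).1 hfB
      rwa [Finset.insert_eq_self.2 hwA] at h2
  set μF : Matching F W :=
    ⟨fun f => (P.fp f).Ch (A f), fun w => (P.wp w).Ch (B w), compat⟩ with hμF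
  -- stability
  have hIR : IndRational P μF :=
    ⟨fun f => (P.fp f).Ch_idem (A f), fun w => (P.wp w).Ch_idem (B w)⟩
  have hNB : ∀ w f, ¬ Blocks P μF w f := by
    rintro w f ⟨hnm, hbf, hbw⟩
    -- first: w ∉ A f
    have hwA : w ∉ A f := by
      intro hwA
      have h1 : insert w (μF.fm f) ⊆ A f :=
        Finset.insert_subset hwA ((P.fp f).Ch_subset (A f))
      have h2 : (P.fp f).Ch (insert w (μF.fm f)) = (P.fp f).Ch (A f) :=
        (P.fp f).Ch_eq_Ch (Finset.subset_insert _ _) h1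
      rw [h2] at hbf
      exact hnm hbf
    -- then: f ∉ B w
    have hfB : f ∉ B w := by
      intro hfB
      have h1 : insert f (μF.wm w) ⊆ B w :=
        Finset.insert_subset hfB ((P.wp w).Ch_subset (B w))
      have h2 : (P.wp w).Ch (insert f (μF.wm w)) = (P.wp w).Ch (B w) :=
        (P.wp w).Ch_eq_Ch (Finset.subset_insert _ _) h1
      rw [h2] at hbw
      exact hnm ((compat f w).2 hbw)
    -- f ∉ B w means w ∉ Ch (insert w (A f))
    have h3 : w ∉ (P.fp f).Ch (insert w (A f)) := fun h => hfB ((fpB w f).2 h)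
    have h4 : (P.fp f).Ch (insert w (A f)) ⊆ A f := by
      intro x hx
      rcases Finset.mem_insert.1 ((P.fp f).Ch_subset _ hx) with rfl | hx2
      · exact absurd hx h3
      · exact hx2
    have h5 : (P.fp f).Ch (insert w (A f)) = (P.fp f).Ch (A f) :=
      ((P.fp f).Ch_eq_Ch h4 (Finset.subset_insert _ _)).symm
    have h6 : insert w (μF.fm f) ⊆ insert w (A f) :=
      Finset.insert_subset_insert w ((P.fp f).Ch_subset (A f))
    have h7 : (P.fp f).Ch (insert w (A f)) ⊆ insert w (μF.fm f) := by
      rw [h5]; exact Finset.subset_insert w _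
    have h8 : (P.fp f).Ch (insert w (μF.fm f)) = (P.fp f).Ch (insert w (A f)) :=
      (P.fp f).Ch_eq_Ch h7 h6
    rw [h8, h5] at hbf
    exact hnm hbf
  refine ⟨μF, ⟨hIR, hNB⟩, ?_⟩
  -- optimality
  intro μ hst f
  -- the prematching associated to the stable matching μ
  set Aμ : F → Finset W := fun f => Finset.univ.filter
      (fun w => f ∈ (P.wp w).Ch (insert f (μ.wm w))) with hAμ
  set Bμ : W → Finset F := fun w => Finset.univ.filter
      (fun f => w ∈ (P.fp f).Ch (insert w (μ.fm f))) with hBμ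
  have hfmA : ∀ f, μ.fm f ⊆ Aμ f := by
    intro f w hw
    have hfwm : f ∈ μ.wm w := (μ.compat f w).1 hw
    simp only [hAμ, Finset.mem_filter, Finset.mem_univ, true_and]
    rw [Finset.insert_eq_self.2 hfwm, hst.1.2 w]
    exact hfwm
  have hwmB : ∀ w, μ.wm w ⊆ Bμ w := by
    intro w f hf
    have hwfm : w ∈ μ.fm f := (μ.compat f w).2 hf
    simp only [hBμ, Finset.mem_filter, Finset.mem_univ, true_and]
    rw [Finset.insert_eq_self.2 hwfm, hst.1.1 f]
    exact hwfm
  have ChAμ : ∀ f, (P.fp f).Ch (Aμ f) = μ.fm f := by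
    intro f
    have hU : Aμ f = μ.fm f ∪ Aμ f := by
      rw [Finset.union_eq_right.2 (hfmA f)]
    rw [hU]
    refine (P.fp f).Ch_union (hs.1 f) (hst.1.1 f) ?_
    intro w hwD hwX hwch
    have hfq : f ∈ (P.wp w).Ch (insert f (μ.wm w)) := by
      simpa [hAμ] using hwD
    exact hst.2 w f ⟨hwX, hwch, hfq⟩
  have ChBμ : ∀ w, (P.wp w).Ch (Bμ w) = μ.wm w := by
    intro w
    have hU : Bμ w = μ.wm w ∪ Bμ w := by
      rw [Finset.union_eq_right.2 (hwmB w)]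
    rw [hU]
    refine (P.wp w).Ch_union (hs.2 w) (hst.1.2 w) ?_
    intro f hfD hfX hfch
    have hwq : w ∈ (P.fp f).Ch (insert w (μ.fm f)) := by
      simpa [hBμ] using hfD
    have hnm : w ∉ μ.fm f := fun h => hfX ((μ.compat f w).1 h)
    exact hst.2 w f ⟨hnm, hwq, hfch⟩
  -- (Aμ, Bμ) is a fixed point of Tmap
  have keyB : ∀ (w : W) (f : F),
      w ∈ (P.fp f).Ch (insert w (Aμ f)) ↔ w ∈ (P.fp f).Ch (insert w (μ.fm f)) := by
    intro w f
    constructor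
    · intro h
      exact (P.fp f).mem_Ch_of_subset (hs.1 f) _
        (Finset.insert_subset_insert w (hfmA f)) (Finset.mem_insert_self w _) h
    · intro h
      by_cases hwf : w ∈ μ.fm f
      · have hwA : w ∈ Aμ f := hfmA f hwf
        rw [Finset.insert_eq_self.2 hwA, ChAμ f]
        exact hwf
      · by_contra hcon
        have h4 : (P.fp f).Ch (insert w (Aμ f)) ⊆ Aμ f := by
          intro x hx
          rcases Finset.mem_insert.1 ((P.fp f).Ch_subset _ hx) with rfl | hx2
          · exact absurd hx hcon
          · exact hx2
        have h5 : (P.fp f).Ch (insert w (Aμ f)) = (P.fp f).Ch (Aμ f) :=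
          ((P.fp f).Ch_eq_Ch h4 (Finset.subset_insert _ _)).symm
        have h6 : insert w (μ.fm f) ⊆ insert w (Aμ f) :=
          Finset.insert_subset_insert w (hfmA f)
        have h7 : (P.fp f).Ch (insert w (Aμ f)) ⊆ insert w (μ.fm f) := by
          rw [h5, ChAμ f]; exact Finset.subset_insert w _
        have h8 : (P.fp f).Ch (insert w (μ.fm f)) = (P.fp f).Ch (insert w (Aμ f)) :=
          (P.fp f).Ch_eq_Ch h7 h6
        rw [h8, h5, ChAμ f] at h
        exact hwf h
  have keyA : ∀ (f : F) (w : W),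
      f ∈ (P.wp w).Ch (insert f (Bμ w)) ↔ f ∈ (P.wp w).Ch (insert f (μ.wm w)) := by
    intro f w
    constructor
    · intro h
      exact (P.wp w).mem_Ch_of_subset (hs.2 w) _
        (Finset.insert_subset_insert f (hwmB w)) (Finset.mem_insert_self f _) h
    · intro h
      by_cases hfw : f ∈ μ.wm w
      · have hfB : f ∈ Bμ w := hwmB w hfw
        rw [Finset.insert_eq_self.2 hfB, ChBμ w]
        exact hfw
      · by_contra hcon
        have h4 : (P.wp w).Ch (insert f (Bμ w)) ⊆ Bμ w := by
          intro x hx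
          rcases Finset.mem_insert.1 ((P.wp w).Ch_subset _ hx) with rfl | hx2
          · exact absurd hx hcon
          · exact hx2
        have h5 : (P.wp w).Ch (insert f (Bμ w)) = (P.wp w).Ch (Bμ w) :=
          ((P.wp w).Ch_eq_Ch h4 (Finset.subset_insert _ _)).symm
        have h6 : insert f (μ.wm w) ⊆ insert f (Bμ w) :=
          Finset.insert_subset_insert f (hwmB w)
        have h7 : (P.wp w).Ch (insert f (Bμ w)) ⊆ insert f (μ.wm w) := by
          rw [h5, ChBμ w]; exact Finset.subset_insert f _
        have h8 : (P.wp w).Ch (insert f (μ.wm w)) = (P.wp w).Ch (insert f (Bμ w)) :=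
          (P.wp w).Ch_eq_Ch h7 h6
        rw [h8, h5, ChBμ w] at h
        exact hfw h
  have hfixμ : Tmap P hs (Aμ, OrderDual.toDual Bμ) = (Aμ, OrderDual.toDual Bμ) := by
    refine Prod.ext ?_ ?_
    · show (fun f => Finset.univ.filter
          (fun w => f ∈ (P.wp w).Ch (insert f (Bμ w)))) = Aμ
      funext f
      ext w
      simp only [Finset.mem_filter, Finset.mem_univ, true_and]
      rw [keyA f w]
      simp [hAμ]
    · show OrderDual.toDual (fun w => Finset.univ.filter
          (fun f => w ∈ (P.fp f).Ch (insert w (Aμ f)))) = OrderDual.toDual Bμ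
      refine congrArg OrderDual.toDual ?_
      funext w
      ext f
      simp only [Finset.mem_filter, Finset.mem_univ, true_and]
      rw [keyB w f]
      simp [hBμ]
  have hle : (Aμ, OrderDual.toDual Bμ) ≤ G := hgreatest _ hfixμ
  have hAsub : Aμ f ⊆ A f := hle.1 f
  have hsub2 : μ.fm f ∪ μF.fm f ⊆ A f := by
    refine Finset.union_subset ((hfmA f).trans hAsub) ?_
    exact (P.fp f).Ch_subset (A f)
  have hsub3 : (P.fp f).Ch (A f) ⊆ μ.fm f ∪ μF.fm f := by
    intro x hx
    exact Finset.mem_union_right _ hx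
  have hBlair : (P.fp f).Ch (μ.fm f ∪ μF.fm f) = μF.fm f :=
    (P.fp f).Ch_eq_Ch hsub3 hsub2
  rcases (P.fp f).Ch_max (S := μ.fm f ∪ μF.fm f) (Finset.subset_union_left) with h | h
  · exact Or.inl (by rw [← hBlair]; exact h.symm)
  · rw [hBlair] at h
    exact Or.inr h

end Existence

/-! ### Uniqueness of the firm-optimal matching; the firm-optimal stable rule -/

section Rule

variable {F W : Type*} [DecidableEq F] [Fintype F] [DecidableEq W] [Fintype W]

omit [DecidableEq F] [Fintype F] [DecidableEq W] [Fintype W] in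
theorem Matching.ext' {μ1 μ2 : Matching F W} (h : μ1.fm = μ2.fm) : μ1 = μ2 := by
  obtain ⟨f1, w1, c1⟩ := μ1
  obtain ⟨f2, w2, c2⟩ := μ2
  simp only at h
  subst h
  have : w1 = w2 := by
    funext w
    ext f
    rw [← c1 f w, ← c2 f w]
  subst this
  rfl

theorem firmOptimal_unique {P : Profile F W} {μ1 μ2 : Matching F W}
    (h1 : FirmOptimal P μ1) (h2 : FirmOptimal P μ2) : μ1 = μ2 := by
  refine Matching.ext' (funext fun f => ?_)
  rcases h1.2 μ2 h2.1 f with h | h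
  · exact h
  · rcases h2.2 μ1 h1.1 f with h' | h'
    · exact h'.symm
    · exact absurd h' (fun h'' => (P.fp f).gt_asymm h h'')

/-- The firm-optimal stable rule. -/
noncomputable def hFopt : Profile F W → Matching F W := fun P =>
  letI := Classical.propDecidable (∃ μ, FirmOptimal P μ)
  if h : ∃ μ, FirmOptimal P μ then h.choose
  else ⟨fun _ => ∅, fun _ => ∅, by simp⟩

theorem hFopt_spec {P : Profile F W} (hs : P.Substitutable) : FirmOptimal P (hFopt P) := by
  have h : ∃ μ, FirmOptimal P μ := exists_firmOptimal P hs
  unfold hFopt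
  rw [dif_pos h]
  exact h.choose_spec

theorem hFopt_eq {P : Profile F W} {μ : Matching F W} (hs : P.Substitutable)
    (hμ : FirmOptimal P μ) : hFopt P = μ :=
  firmOptimal_unique (hFopt_spec hs) hμ

end Rule

/-! ### Preferences from injective rank functions -/

section OfRank

variable {α : Type*} [DecidableEq α] [Fintype α]

def Pref.ofRank (r : Finset α → ℕ) (hr : Function.Injective r) : Pref α where
  gt S T := r S < r T
  isSTO :=
    { trichotomous := fun S T => by
        intro h1 h2
        exact hr (le_antisymm (not_lt.1 h2) (not_lt.1 h1))
      irrefl := fun S => lt_irrefl _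
      trans := fun S T U h1 h2 => lt_trans h1 h2 }

/-- Computable choice function for a rank. -/
def selCh (r : Finset α → ℕ) (S : Finset α) : Finset α :=
  (S.powerset.filter (fun T => ∀ U ∈ S.powerset, r T ≤ r U)).sup id

lemma Ch_ofRank (r : Finset α → ℕ) (hr : Function.Injective r) (S : Finset α) :
    (Pref.ofRank r hr).Ch S = selCh r S := by
  classical
  obtain ⟨T, hT, hmin⟩ :=
    S.powerset.exists_min_image r ⟨∅, Finset.empty_mem_powerset S⟩
  have hfil : S.powerset.filter (fun T => ∀ U ∈ S.powerset, r T ≤ r U) = {T} := by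
    ext U
    simp only [Finset.mem_filter, Finset.mem_singleton]
    constructor
    · rintro ⟨hU, hUmin⟩
      exact hr (le_antisymm (hUmin T hT) (hmin U hU))
    · rintro rfl
      exact ⟨hT, hmin⟩
  have hsel : selCh r S = T := by
    rw [selCh, hfil, Finset.sup_singleton, id]
  rw [hsel]
  refine (Pref.ofRank r hr).Ch_eq_of (Finset.mem_powerset.1 hT) ?_
  intro U hU hne
  show r T < r U
  refine lt_of_le_of_ne (hmin U (Finset.mem_powerset.2 hU)) (fun e => ?_)
  exact hne (hr e).symm

lemma Pref.substitutable_of_small (p : Pref α)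
    (h : ∀ S : Finset α, 2 ≤ S.card → p.gt ∅ S) : p.Substitutable := by
  intro S w w' hw hw' hne hch
  have hcard : (p.Ch S).card ≤ 1 := by
    by_contra hc
    push_neg at hc
    have h2 := h _ hc
    rcases p.Ch_max (Finset.empty_subset S) with h3 | h3
    · rw [← h3] at hc; simp at hc
    · exact p.gt_asymm h2 h3
  have hsing : p.Ch S = {w} :=
    Finset.eq_singleton_iff_unique_mem.2
      ⟨hch, fun x hx => Finset.card_le_one.1 hcard x hx w hch⟩
  have hres : p.Ch (S.erase w') = {w} := by
    refine p.Ch_eq_of (Finset.singleton_subset_iff.2 (Finset.mem_erase.2 ⟨hne, hw⟩)) ?_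
    intro U hU hUne
    rcases p.Ch_max (hU.trans (Finset.erase_subset _ _)) with h3 | h3
    · rw [hsing] at h3; exact absurd h3 hUne
    · rwa [hsing] at h3
  rw [hres]
  exact Finset.mem_singleton_self w

end OfRank

/-! ### The concrete counterexample market -/

section Example

/-- Rank function of the firms (lower is better). Firm 0:
`{2} ≻ {0,1} ≻ {1} ≻ {0} ≻ ∅ ≻ …`.  Firm 1: `{1} ≻ {2} ≻ ∅ ≻ …`. -/
def rkF : Fin 2 → Finset (Fin 3) → ℕ := fun f S =>
  if f = 0 then
    (if S = {2} then 0 else if S = {0,1} then 1 else if S = {1} then 2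
     else if S = {0} then 3 else if S = (∅ : Finset (Fin 3)) then 4
     else if S = {0,1,2} then 5 else if S = {1,2} then 6 else 7)
  else
    (if S = {1} then 0 else if S = {2} then 1 else if S = (∅ : Finset (Fin 3)) then 2
     else if S = {0,2} then 3 else if S = {0,1} then 4 else if S = {0} then 5
     else if S = {0,1,2} then 6 else 7)

/-- Rank function of the workers. Worker 0: `f0 ≻ ∅ ≻ f1`;
worker 1: `f0 ≻ f1 ≻ ∅`; worker 2: `f1 ≻ f0 ≻ ∅`. -/
def rkW : Fin 3 → Finset (Fin 2) → ℕ := fun w S =>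
  if w = 0 then
    (if S = {0} then 0 else if S = (∅ : Finset (Fin 2)) then 1
     else if S = {1} then 2 else 3)
  else if w = 1 then
    (if S = {0} then 0 else if S = {1} then 1
     else if S = (∅ : Finset (Fin 2)) then 2 else 3)
  else
    (if S = {1} then 0 else if S = {0} then 1
     else if S = (∅ : Finset (Fin 2)) then 2 else 3)

lemma hrkF : ∀ f, Function.Injective (rkF f) := by decide
lemma hrkW : ∀ w, Function.Injective (rkW w) := by decide

/-- The example profile. -/
def exP : Profile (Fin 2) (Fin 3) :=
  ⟨fun f => Pref.ofRank (rkF f) (hrkF f), fun w => Pref.ofRank (rkW w) (hrkW w)⟩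

lemma chF (f : Fin 2) (S : Finset (Fin 3)) : (exP.fp f).Ch S = selCh (rkF f) S :=
  Ch_ofRank _ (hrkF f) _

lemma chW (w : Fin 3) (S : Finset (Fin 2)) : (exP.wp w).Ch S = selCh (rkW w) S :=
  Ch_ofRank _ (hrkW w) _

/-- The firm-optimal stable matching of `exP`. -/
def μFex : Matching (Fin 2) (Fin 3) := ⟨![{2}, {1}], ![∅, {1}, {0}], by decide⟩

/-- The worker-optimal stable matching of `exP`. -/
def μWex : Matching (Fin 2) (Fin 3) := ⟨![{0,1}, {2}], ![{0}, {0}, {1}], by decide⟩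

/-- `μFex` is stable for any profile agreeing with `exP` except possibly
at worker 0's preference. -/
lemma stable_muF (Q : Profile (Fin 2) (Fin 3)) (hfp : Q.fp = exP.fp)
    (h1 : Q.wp 1 = exP.wp 1) (h2 : Q.wp 2 = exP.wp 2) : Stable Q μFex := by
  constructor
  · constructor
    · intro f
      rw [hfp, chF]
      revert f
      decide
    · intro w
      fin_cases w
      · show (Q.wp 0).Ch ∅ = ∅
        exact Pref.Ch_empty _
      · show (Q.wp 1).Ch (μFex.wm 1) = μFex.wm 1
        rw [h1, chW]
        decide
      · show (Q.wp 2).Ch (μFex.wm 2) = μFex.wm 2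
        rw [h2, chW]
        decide
  · rintro w f ⟨hnm, hbf, _⟩
    rw [hfp, chF] at hbf
    fin_cases w <;> fin_cases f
    · revert hbf; decide
    · revert hbf; decide
    · revert hbf; decide
    · exact hnm (by decide)
    · exact hnm (by decide)
    · revert hbf; decide

/-- Both firms receive their globally best set in `μFex`, so it dominates
everything for firms. -/
lemma dom_muF (Q : Profile (Fin 2) (Fin 3)) (hfp : Q.fp = exP.fp) :
    ∀ μ : Matching (Fin 2) (Fin 3), ∀ f,
      μFex.fm f = μ.fm f ∨ (Q.fp f).gt (μFex.fm f) (μ.fm f) := by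
  intro μ f
  rw [hfp]
  have key : ∀ (f : Fin 2) (X : Finset (Fin 3)),
      μFex.fm f = X ∨ rkF f (μFex.fm f) < rkF f X := by decide
  exact key f (μ.fm f)

lemma firmOptimal_muF (Q : Profile (Fin 2) (Fin 3)) (hfp : Q.fp = exP.fp)
    (h1 : Q.wp 1 = exP.wp 1) (h2 : Q.wp 2 = exP.wp 2) : FirmOptimal Q μFex :=
  ⟨stable_muF Q hfp h1 h2, fun μ _ f => dom_muF Q hfp μ f⟩

/-- The induced worker assignment of a firm assignment. -/
def wmOf (g : Fin 2 → Finset (Fin 3)) : Fin 3 → Finset (Fin 2) := fun w =>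
  Finset.univ.filter (fun f => w ∈ g f)

/-- Decidable description of stability for `exP`. -/
def StableD (g : Fin 2 → Finset (Fin 3)) : Prop :=
  ((∀ f, selCh (rkF f) (g f) = g f) ∧ (∀ w, selCh (rkW w) (wmOf g w) = wmOf g w)) ∧
  ∀ w f, ¬ (w ∉ g f ∧ w ∈ selCh (rkF f) (insert w (g f)) ∧
    f ∈ selCh (rkW w) (insert f (wmOf g w)))

instance StableD.dec (g : Fin 2 → Finset (Fin 3)) : Decidable (StableD g) := by
  unfold StableD
  infer_instance

lemma stable_iff (μ : Matching (Fin 2) (Fin 3)) : Stable exP μ ↔ StableD μ.fm := by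
  have hwm : ∀ w, μ.wm w = wmOf μ.fm w := by
    intro w
    ext f
    simp [wmOf, μ.compat]
  unfold Stable IndRational Blocks StableD
  simp only [chF, chW, hwm]

lemma enum_stable : ∀ g : Fin 2 → Finset (Fin 3), StableD g →
    g = μFex.fm ∨ g = μWex.fm := by decide

lemma stable_muW : Stable exP μWex := (stable_iff μWex).2 (by decide)

lemma workerOptimal_muW : WorkerOptimal exP μWex := by
  refine ⟨stable_muW, ?_⟩
  intro μ hst w
  have hwm : μ.wm w = wmOf μ.fm w := by
    ext f
    simp [wmOf, μ.compat]
  rcases enum_stable μ.fm ((stable_iff μ).1 hst) with hg | hg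
  · have key : ∀ w : Fin 3, μWex.wm w = wmOf μFex.fm w ∨
        rkW w (μWex.wm w) < rkW w (wmOf μFex.fm w) := by decide
    rw [hwm, hg]
    exact key w
  · have key : ∀ w : Fin 3, μWex.wm w = wmOf μWex.fm w := by decide
    rw [hwm, hg]
    exact Or.inl (key w)

lemma exP_substitutable : exP.Substitutable := by
  constructor
  · intro f
    have key : ∀ (f : Fin 2) (S : Finset (Fin 3)) (w w' : Fin 3), w ∈ S → w' ∈ S → w ≠ w' →
        w ∈ selCh (rkF f) S → w ∈ selCh (rkF f) (S.erase w') := by decide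
    intro S a b h1 h2 h3 h4
    rw [chF] at h4
    rw [chF]
    exact key f S a b h1 h2 h3 h4
  · intro w
    have key : ∀ (w : Fin 3) (S : Finset (Fin 2)) (a b : Fin 2), a ∈ S → b ∈ S → a ≠ b →
        a ∈ selCh (rkW w) S → a ∈ selCh (rkW w) (S.erase b) := by decide
    intro S a b h1 h2 h3 h4
    rw [chW] at h4
    rw [chW]
    exact key w S a b h1 h2 h3 h4

end Example

/-- The General Manipulability Theorem is false for merely
substitutable preferences: there is a many-to-one matching market `(F, W, ≻)` with
substitutable preferences (workers finding every set of two or more firms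
unacceptable), a stable matching rule `h` — namely the firm-optimal stable rule,
which selects the firm-optimal stable matching at every substitutable profile —
and a worker `a` with `h(≻)(a) ≠ μ_W(≻)(a)`, such that no (many-to-one) misreport
`≻'_a` gives `a` a strictly `≻_a`-better assignment than `h(≻)(a)`. -/
theorem stmt13 :
    ∃ (nF nW : ℕ) (P : Profile (Fin nF) (Fin nW))
      (h : Profile (Fin nF) (Fin nW) → Matching (Fin nF) (Fin nW))
      (μW : Matching (Fin nF) (Fin nW)) (a : Fin nW),
      P.Substitutable ∧
      (∀ w : Fin nW, ∀ S : Finset (Fin nF), 2 ≤ S.card → (P.wp w).gt ∅ S) ∧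
      (∀ P' : Profile (Fin nF) (Fin nW), P'.Substitutable → FirmOptimal P' (h P')) ∧
      WorkerOptimal P μW ∧
      (h P).wm a ≠ μW.wm a ∧
      (∀ p' : Pref (Fin nF),
        (∀ S : Finset (Fin nF), 2 ≤ S.card → p'.gt ∅ S) →
        ¬ (P.wp a).gt ((h (P.updateWorker a p')).wm a) ((h P).wm a)) := by
  refine ⟨2, 3, exP, hFopt, μWex, 0, exP_substitutable, ?_, ?_, workerOptimal_muW, ?_, ?_⟩
  · have key : ∀ (w : Fin 3) (S : Finset (Fin 2)), 2 ≤ S.card → rkW w ∅ < rkW w S := by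
      decide
    exact key
  · intro P' hsub'
    exact hFopt_spec hsub'
  · rw [hFopt_eq exP_substitutable (firmOptimal_muF exP rfl rfl rfl)]
    decide
  · intro p' hp2
    have hsub' : (exP.updateWorker 0 p').Substitutable := by
      constructor
      · exact fun f => exP_substitutable.1 f
      · intro w
        by_cases hw : w = 0
        · subst hw
          show (Function.update exP.wp 0 p' 0).Substitutable
          rw [Function.update_self]
          exact p'.substitutable_of_small hp2
        · show (Function.update exP.wp 0 p' w).Substitutable
          rw [Function.update_of_ne hw]
          exact exP_substitutable.2 w
    have h1 : (exP.updateWorker 0 p').wp 1 = exP.wp 1 := by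
      show Function.update exP.wp 0 p' 1 = exP.wp 1
      rw [Function.update_of_ne (by decide)]
    have h2 : (exP.updateWorker 0 p').wp 2 = exP.wp 2 := by
      show Function.update exP.wp 0 p' 2 = exP.wp 2
      rw [Function.update_of_ne (by decide)]
    rw [hFopt_eq hsub' (firmOptimal_muF _ rfl h1 h2),
        hFopt_eq exP_substitutable (firmOptimal_muF exP rfl rfl rfl)]
    exact (exP.wp 0).gt_irrefl _
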